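/- Let x : ℝ → (Fin n → ℝ) and v : ℝ → ℝ, and let α₁, α₂, α₃, δ be strictly positive constants with α₃ < α₂. Assume: (i) α₁·‖x(t)‖² ≤ v(t) ≤ α₂·‖x(t)‖² for all t ≥ 0; (ii) v is nonincreasing on [0, ∞); (iii) v(t + δ) − v(t) ≤ −α₃·‖x(t)‖² for all t ≥ 0. Then for all t ≥ t₀ ≥ 0, v(t) ≤ m_v·exp(−α_v·(t − t₀))·v(t₀), where m_v = 1/(1 − α₃/α₂) and α_v = (1/δ)·log(1/(1 − α₃/α₂)); consequently ‖x(t)‖ ≤ sqrt((α₂/α₁)·m_v)·exp(−(α_v/2)·(t − t₀))·‖x(t₀)‖, so x(t) converges exponentially to 0. -/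

import Mathlib

/-- Euclidean norm of a vector. -/
noncomputable def euclNorm {α : Type*} [Fintype α] (v : α → ℝ) : ℝ :=
  Real.sqrt (∑ i, v i ^ 2)

lemma euclNorm_nonneg {α : Type*} [Fintype α] (v : α → ℝ) : 0 ≤ euclNorm v :=
  Real.sqrt_nonneg _

/-- Exponential stability criterion (Sastry–Bodson): a Lyapunov-like function that is
quadratically bounded, nonincreasing, and decreases by a fixed quadratic amount over
every window of length `δ` forces exponential decay with explicit rate and overshoot. -/
theorem stmt5 (n : ℕ) (x : ℝ → Fin n → ℝ) (v : ℝ → ℝ)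
    (α₁ α₂ α₃ δ : ℝ) (h₁ : 0 < α₁) (h₂ : 0 < α₂) (h₃ : 0 < α₃) (hδ : 0 < δ)
    (h₃₂ : α₃ < α₂)
    (hlb : ∀ t : ℝ, 0 ≤ t → α₁ * euclNorm (x t) ^ 2 ≤ v t)
    (hub : ∀ t : ℝ, 0 ≤ t → v t ≤ α₂ * euclNorm (x t) ^ 2)
    (hmono : AntitoneOn v (Set.Ici (0 : ℝ)))
    (hdec : ∀ t : ℝ, 0 ≤ t → v (t + δ) - v t ≤ -α₃ * euclNorm (x t) ^ 2) :
    ∀ t₀ t : ℝ, 0 ≤ t₀ → t₀ ≤ t →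
      v t ≤ (1 / (1 - α₃ / α₂)) *
          Real.exp (-((1 / δ) * Real.log (1 / (1 - α₃ / α₂))) * (t - t₀)) * v t₀ ∧
      euclNorm (x t) ≤
        Real.sqrt ((α₂ / α₁) * (1 / (1 - α₃ / α₂))) *
          Real.exp (-(((1 / δ) * Real.log (1 / (1 - α₃ / α₂))) / 2) * (t - t₀)) *
            euclNorm (x t₀) := by
  intro t₀ t ht₀ ht
  set ρ : ℝ := 1 - α₃ / α₂ with hρdef
  have hρ0 : 0 < ρ := by
    rw [hρdef]; have : α₃ / α₂ < 1 := (div_lt_one h₂).mpr h₃₂; linarith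
  have hρ1 : ρ < 1 := by
    rw [hρdef]; have : 0 < α₃ / α₂ := div_pos h₃ h₂; linarith
  have hv0 : ∀ s : ℝ, 0 ≤ s → 0 ≤ v s := fun s hs =>
    le_trans (by positivity) (hlb s hs)
  -- one-step contraction
  have hstep : ∀ s : ℝ, 0 ≤ s → v (s + δ) ≤ ρ * v s := by
    intro s hs
    have h1 : v (s + δ) ≤ v s - α₃ * euclNorm (x s) ^ 2 := by
      have := hdec s hs; linarith
    have h2 : (α₃ / α₂) * v s ≤ α₃ * euclNorm (x s) ^ 2 := by
      have := hub s hs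
      have := mul_le_mul_of_nonneg_left this (le_of_lt (div_pos h₃ h₂))
      calc (α₃ / α₂) * v s ≤ (α₃ / α₂) * (α₂ * euclNorm (x s) ^ 2) := this
        _ = α₃ * euclNorm (x s) ^ 2 := by field_simp
    have : v (s + δ) ≤ v s - (α₃ / α₂) * v s := by linarith
    calc v (s + δ) ≤ v s - (α₃ / α₂) * v s := this
      _ = ρ * v s := by ring
  -- iterated contraction
  have hiter : ∀ k : ℕ, v (t₀ + k * δ) ≤ ρ ^ k * v t₀ := by
    intro k
    induction k with
    | zero => simp
    | succ k ih =>
      have hbase : (0 : ℝ) ≤ t₀ + k * δ := by positivity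
      have := hstep (t₀ + k * δ) hbase
      have heq : t₀ + (k + 1 : ℕ) * δ = (t₀ + k * δ) + δ := by push_cast; ring
      rw [heq]
      calc v ((t₀ + k * δ) + δ) ≤ ρ * v (t₀ + k * δ) := this
        _ ≤ ρ * (ρ ^ k * v t₀) := mul_le_mul_of_nonneg_left ih hρ0.le
        _ = ρ ^ (k + 1) * v t₀ := by ring
  set s : ℝ := (t - t₀) / δ with hsdef
  have hs0 : 0 ≤ s := div_nonneg (by linarith) hδ.le
  set k : ℕ := ⌊s⌋₊ with hkdef
  have hks : (k : ℝ) ≤ s := Nat.floor_le hs0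
  have hsk : s < k + 1 := Nat.lt_floor_add_one s
  have hkt : t₀ + k * δ ≤ t := by
    have : (k : ℝ) * δ ≤ s * δ := mul_le_mul_of_nonneg_right hks hδ.le
    have hsδ : s * δ = t - t₀ := by rw [hsdef, div_mul_cancel₀ _ hδ.ne']
    linarith
  have hvt : v t ≤ ρ ^ k * v t₀ := by
    have h1 : v t ≤ v (t₀ + k * δ) :=
      hmono (Set.mem_Ici.mpr (by positivity)) (Set.mem_Ici.mpr (le_trans ht₀ ht)) hkt
    exact le_trans h1 (hiter k)
  -- rewrite the exponential as an rpow
  have hexp : Real.exp (-((1 / δ) * Real.log (1 / ρ)) * (t - t₀)) = ρ ^ s := by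
    rw [Real.rpow_def_of_pos hρ0]
    congr 1
    rw [one_div ρ, Real.log_inv, hsdef]
    field_simp
  have hrpow : ρ ^ (k : ℝ) ≤ (1 / ρ) * ρ ^ s := by
    have h1 : ρ ^ (s : ℝ) ≥ ρ ^ ((k : ℝ) + 1) :=
      Real.rpow_le_rpow_of_exponent_ge hρ0 hρ1.le (by linarith)
    have h2 : ρ ^ ((k : ℝ) + 1) = ρ * ρ ^ (k : ℝ) := by
      rw [Real.rpow_add hρ0, Real.rpow_one]; ring
    rw [ge_iff_le, h2] at h1
    rw [div_mul_eq_mul_div, le_div_iff₀ hρ0, one_mul, mul_comm]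
    exact h1
  have hρk : (ρ : ℝ) ^ (k : ℝ) = ρ ^ k := by
    rw [Real.rpow_natCast]
  have hmain : v t ≤ (1 / ρ) * Real.exp (-((1 / δ) * Real.log (1 / ρ)) * (t - t₀)) * v t₀ := by
    rw [hexp]
    calc v t ≤ ρ ^ k * v t₀ := hvt
      _ = ρ ^ (k : ℝ) * v t₀ := by rw [hρk]
      _ ≤ (1 / ρ) * ρ ^ s * v t₀ :=
          mul_le_mul_of_nonneg_right hrpow (hv0 t₀ ht₀)
  refine ⟨hmain, ?_⟩
  -- norm bound
  set A := (1 / ρ) * Real.exp (-((1 / δ) * Real.log (1 / ρ)) * (t - t₀)) with hAdef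
  have hA0 : 0 ≤ A := by positivity
  have hxt : α₁ * euclNorm (x t) ^ 2 ≤ A * (α₂ * euclNorm (x t₀) ^ 2) := by
    calc α₁ * euclNorm (x t) ^ 2 ≤ v t := hlb t (le_trans ht₀ ht)
      _ ≤ A * v t₀ := hmain
      _ ≤ A * (α₂ * euclNorm (x t₀) ^ 2) :=
          mul_le_mul_of_nonneg_left (hub t₀ ht₀) hA0
  have hsq : euclNorm (x t) ^ 2 ≤ ((α₂ / α₁) * (1 / ρ)) *
      Real.exp (-((1 / δ) * Real.log (1 / ρ)) * (t - t₀)) * euclNorm (x t₀) ^ 2 := by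
    have key2 : ((α₂ / α₁) * (1 / ρ)) *
        Real.exp (-((1 / δ) * Real.log (1 / ρ)) * (t - t₀)) * euclNorm (x t₀) ^ 2 =
        (A * (α₂ * euclNorm (x t₀) ^ 2)) / α₁ := by
      rw [hAdef]; field_simp
    rw [key2, le_div_iff₀ h₁]
    linarith [hxt]
  -- take square roots
  have hRHSnn : 0 ≤ Real.sqrt ((α₂ / α₁) * (1 / ρ)) *
      Real.exp (-(((1 / δ) * Real.log (1 / ρ)) / 2) * (t - t₀)) * euclNorm (x t₀) :=
    mul_nonneg (mul_nonneg (Real.sqrt_nonneg _) (Real.exp_pos _).le) (euclNorm_nonneg _)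
  have key : euclNorm (x t) ^ 2 ≤ (Real.sqrt ((α₂ / α₁) * (1 / ρ)) *
      Real.exp (-(((1 / δ) * Real.log (1 / ρ)) / 2) * (t - t₀)) * euclNorm (x t₀)) ^ 2 := by
    have h1 : (Real.sqrt ((α₂ / α₁) * (1 / ρ))) ^ 2 = (α₂ / α₁) * (1 / ρ) :=
      Real.sq_sqrt (by positivity)
    have h2 : (Real.exp (-(((1 / δ) * Real.log (1 / ρ)) / 2) * (t - t₀))) ^ 2 =
        Real.exp (-((1 / δ) * Real.log (1 / ρ)) * (t - t₀)) := by
      rw [← Real.exp_nat_mul]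
      congr 1; ring
    calc euclNorm (x t) ^ 2 ≤ ((α₂ / α₁) * (1 / ρ)) *
        Real.exp (-((1 / δ) * Real.log (1 / ρ)) * (t - t₀)) * euclNorm (x t₀) ^ 2 := hsq
      _ = _ := by rw [mul_pow, mul_pow, h1, h2]
  have := Real.sqrt_le_sqrt key
  rwa [Real.sqrt_sq (euclNorm_nonneg _), Real.sqrt_sq hRHSnn] at this
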